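/- Let $H_1$ be an $n\times n$ complex Hermitian matrix with spectral decomposition $H_1 = Q\Lambda Q^\dagger$, $Q$ unitary, $\Lambda = \mathrm{diag}(\lambda_1,\dots,\lambda_n)$ real, and set $\lambda_+ := \max\{0,\lambda_1,\dots,\lambda_n\}$. For $u_0\in\mathbb{C}^n$, $u_0\neq 0$, define the explicit warped solution $v(t,p) := Q\,\mathrm{diag}\big(e^{-|p-\lambda_1 t|},\dots,e^{-|p-\lambda_n t|}\big)\,Q^\dagger u_0$ and let $u(t) := \exp(tH_1)u_0$. Then for every $t\ge 0$, $$\frac{\int_{\lambda_+ t}^{\infty}\|v(t,p)\|^2\,dp}{\int_{-\infty}^{\infty}\|v(t,p)\|^2\,dp} = \frac{1}{2}\Big(\frac{\|e^{-\lambda_+ t}\,u(t)\|}{\|u_0\|}\Big)^2.$$ -/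

import Mathlib

open Matrix MeasureTheory

/-- The Euclidean norm on `Fin n → ℂ`. -/
noncomputable def euclNorm {n : ℕ} (x : Fin n → ℂ) : ℝ :=
  Real.sqrt (∑ i, ‖x i‖ ^ 2)


lemma euclNorm_sq {n : ℕ} (x : Fin n → ℂ) : euclNorm x ^ 2 = ∑ i, ‖x i‖ ^ 2 :=
  Real.sq_sqrt (by positivity)

lemma sum_sq_mulVec {n : ℕ} {Q : Matrix (Fin n) (Fin n) ℂ} (hQ : Qᴴ * Q = 1)
    (x : Fin n → ℂ) : ∑ i, ‖(Q.mulVec x) i‖ ^ 2 = ∑ i, ‖x i‖ ^ 2 := by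
  have h1 : ∀ y : Fin n → ℂ, (star y ⬝ᵥ y).re = ∑ i, ‖y i‖ ^ 2 := by
    intro y
    simp only [dotProduct, Pi.star_apply, Complex.re_sum]
    refine Finset.sum_congr rfl fun i _ => ?_
    rw [Complex.star_def, ← Complex.normSq_eq_conj_mul_self, Complex.normSq_eq_norm_sq]
    simp [← Complex.ofReal_pow]
  have key : star (Q.mulVec x) ⬝ᵥ Q.mulVec x = star x ⬝ᵥ x := by
    rw [star_mulVec, dotProduct_mulVec, vecMul_vecMul, hQ, vecMul_one]
  rw [← h1, ← h1, key]

lemma integrable_exp2 (c : ℝ) : Integrable (fun p : ℝ => Real.exp (-(2 * |p - c|))) := by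
  have h1 : IntegrableOn (fun p : ℝ => Real.exp (-(2 * |p|))) (Set.Ioi 0) := by
    refine (exp_neg_integrableOn_Ioi 0 (by norm_num : (0:ℝ) < 2)).congr_fun ?_ measurableSet_Ioi
    intro x hx
    show Real.exp (-2 * x) = Real.exp (-(2 * |x|))
    rw [abs_of_pos hx, neg_mul]
  have h2 : IntegrableOn (fun p : ℝ => Real.exp (-(2 * |p|))) (Set.Iic 0) := by
    rw [← Measure.map_neg_eq_self (volume : Measure ℝ)]
    have m : MeasurableEmbedding fun x : ℝ => -x := (Homeomorph.neg ℝ).measurableEmbedding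
    rw [m.integrableOn_map_iff]
    simp_rw [Function.comp_def, abs_neg, Set.neg_preimage, Set.neg_Iic, neg_zero]
    exact Iff.mpr integrableOn_Ici_iff_integrableOn_Ioi h1
  have : Integrable (fun p : ℝ => Real.exp (-(2 * |p|))) := by
    rw [← integrableOn_univ, ← Set.Iic_union_Ioi (a := (0:ℝ))]
    exact h2.union h1
  exact this.comp_sub_right c

lemma exp2_integral_Ioi (a c : ℝ) (h : c ≤ a) :
    ∫ p in Set.Ioi a, Real.exp (-(2 * |p - c|)) = (1 / 2) * Real.exp (-(2 * (a - c))) := by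
  have h1 : Set.EqOn (fun p : ℝ => Real.exp (-(2 * |p - c|)))
      (fun p : ℝ => Real.exp (2 * c) * Real.exp (-(2 * p))) (Set.Ioi a) := by
    intro p hp
    have : c ≤ p := le_trans h (le_of_lt hp)
    simp only
    rw [abs_of_nonneg (by linarith), ← Real.exp_add]
    ring_nf
  rw [setIntegral_congr_fun measurableSet_Ioi h1, integral_const_mul]
  have h2 : ∫ p in Set.Ioi a, Real.exp (-(2 * p)) = (1 / 2) * Real.exp (-(2 * a)) := by
    have := integral_comp_mul_left_Ioi (fun x => Real.exp (-x)) a (by norm_num : (0:ℝ) < 2)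
    simp only [smul_eq_mul, integral_exp_neg_Ioi] at this
    rw [this]; norm_num
  rw [h2, ← mul_assoc, mul_comm (Real.exp (2*c)) (1/2), mul_assoc, ← Real.exp_add]
  ring_nf

lemma exp2_integral (c : ℝ) : ∫ p : ℝ, Real.exp (-(2 * |p - c|)) = 1 := by
  rw [show (fun p : ℝ => Real.exp (-(2 * |p - c|)))
      = (fun p : ℝ => (fun q => Real.exp (-(2 * |q|))) (p - c)) from rfl,
    integral_sub_right_eq_self (fun q : ℝ => Real.exp (-(2 * |q|))) c,
    integral_comp_abs (f := fun x : ℝ => Real.exp (-(2 * x)))]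
  have h2 : ∫ p in Set.Ioi (0:ℝ), Real.exp (-(2 * p)) = (1 / 2) := by
    have := integral_comp_mul_left_Ioi (fun x => Real.exp (-x)) 0 (by norm_num : (0:ℝ) < 2)
    simp only [smul_eq_mul, integral_exp_neg_Ioi, mul_zero, neg_zero, Real.exp_zero] at this
    rw [this]; norm_num
  rw [h2]; norm_num

/-- for Hermitian `H₁ = Q Λ Q†` with real diagonal `Λ`,
`λ₊ = max{0, λ₁, …, λₙ}` and `u₀ ≠ 0`, the explicit warped solution
`v(t,p) = Q diag(e^{-|p-λᵢt|}) Q† u₀` and `u(t) = exp(tH₁)u₀` satisfy, for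
`t ≥ 0`,
`(∫_{p ≥ λ₊t} ‖v(t,p)‖² dp) / (∫_ℝ ‖v(t,p)‖² dp)
  = (1/2)(‖e^{-λ₊t} u(t)‖ / ‖u₀‖)²`. -/
theorem stmt6 {n : ℕ} (H1 Q : Matrix (Fin n) (Fin n) ℂ) (l : Fin n → ℝ)
    (hH1 : H1.IsHermitian) (hQ : Q ∈ Matrix.unitaryGroup (Fin n) ℂ)
    (hspec : H1 = Q * Matrix.diagonal (fun i => (l i : ℂ)) * Qᴴ)
    (lp : ℝ) (hlp0 : 0 ≤ lp) (hlpub : ∀ i, l i ≤ lp)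
    (hlpmem : lp = 0 ∨ ∃ i, lp = l i)
    (u0 : Fin n → ℂ) (hu0 : u0 ≠ 0)
    (v : ℝ → ℝ → Fin n → ℂ)
    (hv : ∀ t p : ℝ, v t p =
      (Q * Matrix.diagonal (fun i => (Real.exp (-|p - l i * t|) : ℂ)) * Qᴴ).mulVec u0)
    (u : ℝ → Fin n → ℂ)
    (hu : ∀ t : ℝ, u t = (NormedSpace.exp (t • H1)).mulVec u0) :
    ∀ t : ℝ, 0 ≤ t →
      (∫ p in Set.Ioi (lp * t), (euclNorm (v t p)) ^ 2) / (∫ p : ℝ, (euclNorm (v t p)) ^ 2)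
        = (1 / 2) * (euclNorm (Real.exp (-(lp * t)) • u t) / euclNorm u0) ^ 2 := by
  intro t ht
  have hQHQ : Qᴴ * Q = 1 := by
    simpa [Matrix.star_eq_conjTranspose] using hQ.1
  have hQQH : Q * Qᴴ = 1 := by
    simpa [Matrix.star_eq_conjTranspose] using hQ.2
  set w : Fin n → ℂ := Qᴴ.mulVec u0 with hwdef
  -- norm of v
  have hvsum : ∀ p : ℝ, euclNorm (v t p) ^ 2
      = ∑ i, Real.exp (-(2 * |p - l i * t|)) * ‖w i‖ ^ 2 := by
    intro p
    rw [hv, euclNorm_sq, ← Matrix.mulVec_mulVec, ← Matrix.mulVec_mulVec,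
      sum_sq_mulVec hQHQ]
    refine Finset.sum_congr rfl fun i _ => ?_
    rw [Matrix.mulVec_diagonal, norm_mul, mul_pow]
    congr 1
    rw [Complex.norm_real, Real.norm_eq_abs, abs_of_pos (Real.exp_pos _), sq, ← Real.exp_add]
    congr 1
    ring
  -- norm of u0
  have hu0w : u0 = Q.mulVec w := by
    rw [hwdef, Matrix.mulVec_mulVec, hQQH, Matrix.one_mulVec]
  have hNu0 : euclNorm u0 ^ 2 = ∑ i, ‖w i‖ ^ 2 := by
    rw [euclNorm_sq]
    conv_lhs => rw [hu0w]
    exact sum_sq_mulVec hQHQ w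
  -- norm of scaled u t
  have hQunit : IsUnit Q := ⟨⟨Q, Qᴴ, hQQH, hQHQ⟩, rfl⟩
  have hQinv : Q⁻¹ = Qᴴ := Matrix.inv_eq_right_inv hQQH
  have hexp : NormedSpace.exp (t • H1)
      = Q * Matrix.diagonal (fun i => Complex.exp ((t * l i : ℝ) : ℂ)) * Qᴴ := by
    have hst : t • H1 = Q * Matrix.diagonal (fun i => ((t * l i : ℝ) : ℂ)) * Qᴴ := by
      rw [hspec, ← smul_mul_assoc, ← mul_smul_comm]
      congr 2
      ext i j
      by_cases h : i = j <;>
        simp [h, Matrix.diagonal_apply, Complex.real_smul, Complex.ofReal_mul]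
    rw [hst, ← hQinv, Matrix.exp_conj Q _ hQunit, hQinv, Matrix.exp_diagonal]
    congr 2
    rw [Pi.exp_def]
    funext i
    rw [← Complex.exp_eq_exp_ℂ]
  have husum : euclNorm (Real.exp (-(lp * t)) • u t) ^ 2
      = ∑ i, Real.exp (-(2 * (lp * t - l i * t))) * ‖w i‖ ^ 2 := by
    rw [euclNorm_sq, hu t, hexp, ← Matrix.mulVec_mulVec, ← Matrix.mulVec_mulVec]
    have hsm : Real.exp (-(lp * t)) • Q.mulVec (Matrix.diagonal
          (fun i => Complex.exp ((t * l i : ℝ) : ℂ)) *ᵥ (Qᴴ *ᵥ u0))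
        = Q.mulVec (Real.exp (-(lp * t)) • (Matrix.diagonal
          (fun i => Complex.exp ((t * l i : ℝ) : ℂ)) *ᵥ w)) := by
      rw [Matrix.mulVec_smul, hwdef]
    rw [hsm, sum_sq_mulVec hQHQ]
    refine Finset.sum_congr rfl fun i _ => ?_
    rw [Pi.smul_apply, Matrix.mulVec_diagonal, norm_smul, Real.norm_eq_abs,
      abs_of_pos (Real.exp_pos _), norm_mul, Complex.norm_exp_ofReal]
    rw [mul_pow, mul_pow]
    rw [← mul_assoc]
    congr 1
    rw [sq, sq, ← Real.exp_add, ← Real.exp_add, ← Real.exp_add]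
    congr 1
    ring
  -- integrals
  have hInt : ∀ i : Fin n, Integrable
      (fun p : ℝ => Real.exp (-(2 * |p - l i * t|)) * ‖w i‖ ^ 2) :=
    fun i => (integrable_exp2 (l i * t)).mul_const _
  have hden : (∫ p : ℝ, euclNorm (v t p) ^ 2) = ∑ i, ‖w i‖ ^ 2 := by
    simp only [hvsum]
    rw [integral_finset_sum _ (fun i _ => hInt i)]
    refine Finset.sum_congr rfl fun i _ => ?_
    rw [integral_mul_const, exp2_integral, one_mul]
  have hnum : (∫ p in Set.Ioi (lp * t), euclNorm (v t p) ^ 2)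
      = (1 / 2) * ∑ i, Real.exp (-(2 * (lp * t - l i * t))) * ‖w i‖ ^ 2 := by
    simp only [hvsum]
    rw [integral_finset_sum _ (fun i _ => (hInt i).integrableOn), Finset.mul_sum]
    refine Finset.sum_congr rfl fun i _ => ?_
    rw [integral_mul_const, exp2_integral_Ioi _ _
      (mul_le_mul_of_nonneg_right (hlpub i) ht)]
    ring
  -- positivity of denominators
  have hNpos : (0:ℝ) < ∑ i, ‖w i‖ ^ 2 := by
    rw [← hNu0, euclNorm_sq]
    obtain ⟨i, hi⟩ := Function.ne_iff.mp hu0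
    refine Finset.sum_pos' (fun j _ => by positivity) ⟨i, Finset.mem_univ i, ?_⟩
    exact pow_pos (norm_pos_iff.mpr hi) 2
  rw [hnum, hden, div_pow, husum, hNu0, mul_div_assoc]
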